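/- Let K be a field, q ∈ K* of order m, h ∣ m, k = m/h. For α, β, α', β' ∈ K* with α^k = α'^k, and β = β'(q^h)^r for some r ∈ ℤ/kℤ, the simple modules M(α,β) and M(α',β') over the rank-2 quantum torus A_{q^h} (with actions e(a)·X = α e(a+1), e(a)·Y = α^{-1}β(q^h)^{a-1} e(a−1), and similarly for primed parameters) are isomorphic via φ(e(a)) = (α^{-1}α')^a e(a + r). -/

import Mathlib

/-- The standard basis vector `e a` of the `K`-vector space `ZMod k → K`. -/
def e (K : Type*) [Field K] (k : ℕ) (a : ZMod k) : ZMod k → K := Pi.single a 1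

private lemma pow_mod_eq {K : Type*} [Field K] {k : ℕ} {u : K} (hu : u ^ k = 1)
    (n : ℕ) : u ^ (n % k) = u ^ n := by
  conv_rhs => rw [← Nat.div_add_mod n k]
  rw [pow_add, pow_mul, hu, one_pow, one_mul]

/-- If `α^k = α'^k` and `β = β'(q^h)^r` for some `r ∈ ℤ/kℤ`, then the modules
`M(α,β)` and `M(α',β')` over the rank-2 quantum torus `A_{q^h}` are isomorphic via
`φ(e a) = (α⁻¹α')^a e (a + r)`. -/
theorem stmt_7 {K : Type*} [Field K] (m h k : ℕ) (hm : 0 < m) (q : Kˣ)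
    (hq : orderOf q = m) (hh : 0 < h) (hdvd : h ∣ m) (hk : k = m / h)
    (α β α' β' : K) (hα : α ≠ 0) (hβ : β ≠ 0) (hα' : α' ≠ 0) (hβ' : β' ≠ 0)
    (r : ZMod k) (hαα' : α ^ k = α' ^ k) (hββ' : β = β' * ((q : K) ^ h) ^ r.val)
    (X Y X' Y' : (ZMod k → K) →ₗ[K] (ZMod k → K))
    (hX : ∀ a : ZMod k, X (e K k a) = α • e K k (a + 1))
    (hY : ∀ a : ZMod k, Y (e K k a) =
      (α⁻¹ * β * ((q : K) ^ h) ^ (a - 1).val) • e K k (a - 1))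
    (hX' : ∀ a : ZMod k, X' (e K k a) = α' • e K k (a + 1))
    (hY' : ∀ a : ZMod k, Y' (e K k a) =
      (α'⁻¹ * β' * ((q : K) ^ h) ^ (a - 1).val) • e K k (a - 1))
    (φ : (ZMod k → K) →ₗ[K] (ZMod k → K))
    (hφ : ∀ a : ZMod k, φ (e K k a) = (α⁻¹ * α') ^ a.val • e K k (a + r)) :
    (∀ v, φ (X v) = X' (φ v)) ∧ (∀ v, φ (Y v) = Y' (φ v)) ∧
      Function.Bijective φ := by
  have hk0 : 0 < k := by
    rcases hdvd with ⟨c, rfl⟩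
    subst hk
    rw [Nat.mul_div_cancel_left _ hh]
    rcases Nat.eq_zero_or_pos c with rfl | hc
    · simp at hm
    · exact hc
  haveI : NeZero k := ⟨hk0.ne'⟩
  set c : K := α⁻¹ * α' with hc
  have hc0 : c ≠ 0 := by simp [hc, hα, hα']
  have hck : c ^ k = 1 := by
    rw [hc, mul_pow, ← hαα', inv_pow, inv_mul_cancel₀ (pow_ne_zero _ hα)]
  set d : K := (q : K) ^ h with hd
  have hdk : d ^ k = 1 := by
    have : q ^ m = 1 := by rw [← hq]; exact pow_orderOf_eq_one q
    have hm' : h * k = m := by rw [hk, Nat.mul_div_cancel' hdvd]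
    have : (q ^ h) ^ k = 1 := by rw [← pow_mul, hm', this]
    calc d ^ k = ((q ^ h) ^ k : Kˣ) := by push_cast [hd]; ring
    _ = 1 := by rw [this]; simp
  have hd0 : d ≠ 0 := pow_ne_zero _ (Units.ne_zero q)
  -- exponent lemmas
  have hval : ∀ (u : K), u ^ k = 1 → ∀ n : ℕ, u ^ ((n : ZMod k)).val = u ^ n := by
    intro u hu n; rw [ZMod.val_natCast]; exact pow_mod_eq hu n
  have hrepr : ∀ a : ZMod k, a = ((a.val : ℕ) : ZMod k) := fun a =>
    (ZMod.natCast_zmod_val a).symm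
  have hbe : ∀ a : ZMod k, (Pi.basisFun K (ZMod k)) a = e K k a := by
    intro a; simp [e]
  have hck1 : c ^ (k - 1) = c⁻¹ := by
    field_simp
    rw [← pow_succ, Nat.sub_add_cancel hk0, hck]
  -- cast identities for shifted indices
  have hadd1 : ∀ a : ZMod k, a + 1 = ((a.val + 1 : ℕ) : ZMod k) := by
    intro a; push_cast; rw [ZMod.natCast_zmod_val]
  have hsub1 : ∀ a : ZMod k, a - 1 = ((a.val + (k - 1) : ℕ) : ZMod k) := by
    intro a
    have : ((k - 1 : ℕ) : ZMod k) = -1 := by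
      have : ((k : ℕ) : ZMod k) = 0 := ZMod.natCast_self k
      push_cast [Nat.cast_sub hk0]
      simp
    push_cast [this]
    rw [ZMod.natCast_zmod_val]; ring
  have haddr : ∀ a : ZMod k, a + r = ((a.val + r.val : ℕ) : ZMod k) := by
    intro a; push_cast; rw [ZMod.natCast_zmod_val, ZMod.natCast_zmod_val]
  -- main computations on basis vectors
  have keyX : ∀ a : ZMod k, φ (X (e K k a)) = X' (φ (e K k a)) := by
    intro a
    rw [hX, map_smul, hφ, hφ, map_smul, hX', smul_smul, smul_smul]
    have h1 : ((a + 1 : ZMod k) + r) = (a + r) + 1 := by ring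
    rw [h1]
    congr 1
    rw [hadd1 a, ZMod.val_natCast, pow_mod_eq hck]
    rw [pow_succ]
    field_simp [hc]
    rw [hc, mul_inv_cancel_left₀ hα]
  have keyY : ∀ a : ZMod k, φ (Y (e K k a)) = Y' (φ (e K k a)) := by
    intro a
    rw [hY, map_smul, hφ, hφ, map_smul, hY', smul_smul, smul_smul]
    have h1 : ((a - 1 : ZMod k) + r) = (a + r) - 1 := by ring
    rw [h1]
    congr 1
    rw [hsub1 a, ZMod.val_natCast, pow_mod_eq hck, pow_mod_eq hdk]
    have h2 : ((a + r : ZMod k) - 1) = ((a.val + r.val + (k - 1) : ℕ) : ZMod k) := by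
      rw [haddr a, hsub1, ZMod.val_natCast, Nat.cast_add, Nat.cast_add,
        ZMod.natCast_mod]
    rw [h2, ZMod.val_natCast, pow_mod_eq hdk]
    rw [hββ']
    rw [pow_add, pow_add, pow_add, hck1]
    field_simp [hc]
    rw [hc, mul_inv_cancel_left₀ hα, pow_add]
    ring
  -- extend to all vectors
  have extend : ∀ (F G : (ZMod k → K) →ₗ[K] (ZMod k → K)),
      (∀ a, F (e K k a) = G (e K k a)) → ∀ v, F v = G v := by
    intro F G hFG v
    have : F = G := by
      apply Module.Basis.ext (Pi.basisFun K (ZMod k))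
      intro a; rw [hbe a]; exact hFG a
    rw [this]
  have eqX : ∀ v, φ (X v) = X' (φ v) := fun v =>
    extend (φ.comp X) (X'.comp φ) (fun a => by simpa using keyX a) v
  have eqY : ∀ v, φ (Y v) = Y' (φ v) := fun v =>
    extend (φ.comp Y) (Y'.comp φ) (fun a => by simpa using keyY a) v
  set ψ : (ZMod k → K) →ₗ[K] (ZMod k → K) :=
    (Pi.basisFun K (ZMod k)).constr K (fun a => (c ^ (a - r).val)⁻¹ • e K k (a - r))
    with hψdef
  have hψ : ∀ a : ZMod k, ψ (e K k a) = (c ^ (a - r).val)⁻¹ • e K k (a - r) := by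
    intro a
    rw [← hbe, hψdef, Module.Basis.constr_basis]
  have hleft : ∀ v, ψ (φ v) = v := fun v => by
    have := extend (ψ.comp φ) LinearMap.id (fun a => by
      rw [LinearMap.comp_apply, hφ, map_smul, hψ, smul_smul, add_sub_cancel_right,
        mul_inv_cancel₀ (pow_ne_zero _ hc0), one_smul, LinearMap.id_apply]) v
    simpa using this
  have hright : ∀ v, φ (ψ v) = v := fun v => by
    have := extend (φ.comp ψ) LinearMap.id (fun a => by
      rw [LinearMap.comp_apply, hψ, map_smul, hφ, smul_smul, sub_add_cancel,
        inv_mul_cancel₀ (pow_ne_zero _ hc0), one_smul, LinearMap.id_apply]) v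
    simpa using this
  exact ⟨eqX, eqY, Function.bijective_iff_has_inverse.mpr ⟨ψ, hleft, hright⟩⟩
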